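/- Let f: ℝ^m → ℝ^m be given by f(a)_i = 1 - 1/(1 + sum_j d_{ij} a_j) with nonnegative integers d_{ij}. If a vector l ∈ [0,1]^m satisfies l ≥ f(a) whenever l ≥ a componentwise (i.e., l_i ≥ 1 - 1/(1 + sum_j d_{ij} a_j) for every a with 0 ≤ a ≤ l), and l_i ≥ δ_i > 0 for all i, then l dominates every fixed point of f in [0,1]^m reachable by iterating f from the vector (δ_1,...,δ_m); in particular, iterating the monotone map f from any positive starting vector below the escape probability vector E converges to a fixed point dominated by l. -/

import Mathlib

/-- Let `f(a)_i = 1 - 1/(1 + ∑_j d_{ij} a_j)` with nonnegative integers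
`d_{ij}`. Suppose `l ∈ [0,1]^m` satisfies `f(a) ≤ l` componentwise whenever
`0 ≤ a ≤ l`, and `l_i ≥ δ_i > 0` for all `i`. Then `l` dominates every fixed point of
`f` reachable by iterating `f` from `δ`; and moreover, iterating the monotone map `f`
from any positive starting vector below the escape probability vector `E` (a fixed
point of `f` in `[0,1]^m` with `δ ≤ E`) converges to a fixed point dominated by `l`. -/
theorem stmt_14 (m : ℕ) (dmat : Fin m → Fin m → ℕ) (l δ E : Fin m → ℝ)
    (f : (Fin m → ℝ) → (Fin m → ℝ))
    (hf : ∀ a i, f a i = 1 - 1 / (1 + ∑ j, (dmat i j : ℝ) * a j))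
    (hl : ∀ i, 0 ≤ l i ∧ l i ≤ 1)
    (hδ : ∀ i, 0 < δ i ∧ δ i ≤ l i)
    (hE : (∀ i, 0 ≤ E i ∧ E i ≤ 1) ∧ f E = E ∧ ∀ i, δ i ≤ E i)
    (hdom : ∀ a : Fin m → ℝ, (∀ i, 0 ≤ a i) → (∀ i, a i ≤ l i) → ∀ i, f a i ≤ l i) :
    (∀ x : Fin m → ℝ,
      Filter.Tendsto (fun n => f^[n] δ) Filter.atTop (nhds x) → f x = x →
        ∀ i, x i ≤ l i) ∧
    (∀ a₀ : Fin m → ℝ, (∀ i, 0 < a₀ i) → (∀ i, a₀ i ≤ E i) →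
      ∃ x : Fin m → ℝ, Filter.Tendsto (fun n => f^[n] a₀) Filter.atTop (nhds x) ∧
        f x = x ∧ ∀ i, x i ≤ l i) := by
  obtain ⟨hE01, hfE, hδE⟩ := hE
  -- basic sum facts
  have hS : ∀ a : Fin m → ℝ, (∀ i, 0 ≤ a i) → ∀ i, 0 ≤ ∑ j, (dmat i j : ℝ) * a j :=
    fun a ha i => Finset.sum_nonneg fun j _ => mul_nonneg (Nat.cast_nonneg _) (ha j)
  have hden : ∀ a : Fin m → ℝ, (∀ i, 0 ≤ a i) → ∀ i,
      (0:ℝ) < 1 + ∑ j, (dmat i j : ℝ) * a j :=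
    fun a ha i => by linarith [hS a ha i]
  -- nonnegativity of f
  have hnn : ∀ a : Fin m → ℝ, (∀ i, 0 ≤ a i) → ∀ i, 0 ≤ f a i := by
    intro a ha i
    rw [hf]
    have h1 : (0:ℝ) < 1 + ∑ j, (dmat i j : ℝ) * a j := hden a ha i
    have h2 : 1 / (1 + ∑ j, (dmat i j : ℝ) * a j) ≤ 1 := by
      rw [div_le_one h1]; linarith [hS a ha i]
    linarith
  -- monotonicity of f
  have hmono : ∀ a b : Fin m → ℝ, (∀ i, 0 ≤ a i) → (∀ i, a i ≤ b i) → ∀ i, f a i ≤ f b i := by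
    intro a b ha hab i
    rw [hf, hf]
    have h1 : (0:ℝ) < 1 + ∑ j, (dmat i j : ℝ) * a j := hden a ha i
    have hsum : ∑ j, (dmat i j : ℝ) * a j ≤ ∑ j, (dmat i j : ℝ) * b j :=
      Finset.sum_le_sum fun j _ => mul_le_mul_of_nonneg_left (hab j) (Nat.cast_nonneg _)
    have h2 : 1 / (1 + ∑ j, (dmat i j : ℝ) * b j) ≤ 1 / (1 + ∑ j, (dmat i j : ℝ) * a j) :=
      one_div_le_one_div_of_le h1 (by linarith)
    linarith
  -- choosing a small positive t below a positive vector
  have hsmall : ∀ c : Fin m → ℝ, (∀ i, 0 < c i) → ∃ t : ℝ, 0 < t ∧ t ≤ 1 ∧ ∀ i, t ≤ c i := by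
    intro c hc
    rcases isEmpty_or_nonempty (Fin m) with h | h
    · exact ⟨1, one_pos, le_refl 1, fun i => (h.elim i)⟩
    · refine ⟨min 1 (Finset.univ.inf' Finset.univ_nonempty c), ?_, min_le_left _ _, ?_⟩
      · exact lt_min one_pos (by rw [Finset.lt_inf'_iff]; intro i _; exact hc i)
      · intro i; exact le_trans (min_le_right _ _) (Finset.inf'_le _ (Finset.mem_univ i))
  -- the key convergence lemma: iterates from t • E converge to E
  have hconv : ∀ t : ℝ, 0 < t → t ≤ 1 →
      Filter.Tendsto (fun n => f^[n] (t • E)) Filter.atTop (nhds E) := by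
    intro t ht ht1
    set u : ℕ → Fin m → ℝ := fun n => f^[n] (t • E) with hu_def
    have hu0 : ∀ i, u 0 i = t * E i := by intro i; simp [hu_def]
    have husucc : ∀ n, u (n + 1) = f (u n) := by
      intro n; simp [hu_def, Function.iterate_succ_apply']
    -- nonnegativity of iterates
    have hupos : ∀ n, ∀ i, 0 ≤ u n i := by
      intro n
      induction n with
      | zero => intro i; rw [hu0]; exact mul_nonneg ht.le (hE01 i).1
      | succ n ih => intro i; rw [husucc]; exact hnn _ ih i
    -- iterates bounded by E
    have huE : ∀ n, ∀ i, u n i ≤ E i := by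
      intro n
      induction n with
      | zero =>
        intro i; rw [hu0]
        nlinarith [(hE01 i).1, ht1, ht.le]
      | succ n ih =>
        intro i; rw [husucc]
        calc f (u n) i ≤ f E i := hmono _ _ (hupos n) ih i
          _ = E i := by rw [hfE]
    -- a scalar inequality: t * (1 - 1/(1+A)) ≤ 1 - 1/(1+t*A)
    have hscalar : ∀ A : ℝ, 0 ≤ A → t * (1 - 1 / (1 + A)) ≤ 1 - 1 / (1 + t * A) := by
      intro A hA
      have h1 : (0:ℝ) < 1 + A := by linarith
      have h2 : (0:ℝ) < 1 + t * A := by nlinarith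
      have e1 : t * (1 - 1 / (1 + A)) = t * A / (1 + A) := by field_simp; ring
      have e2 : 1 - 1 / (1 + t * A) = t * A / (1 + t * A) := by field_simp; ring
      rw [e1, e2, div_le_div_iff₀ h1 h2]
      have htA : t * A ≤ A := by nlinarith
      nlinarith [mul_nonneg (mul_nonneg ht.le hA) (sub_nonneg.2 htA)]
    -- the sequence is monotone
    have humono : ∀ n, ∀ i, u n i ≤ u (n + 1) i := by
      intro n
      induction n with
      | zero =>
        intro i
        rw [hu0, husucc, hf]
        have hEi : E i = 1 - 1 / (1 + ∑ j, (dmat i j : ℝ) * E j) := by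
          conv_lhs => rw [← hfE]
          exact hf E i
        have hsum : ∑ j, (dmat i j : ℝ) * (u 0 j) = t * ∑ j, (dmat i j : ℝ) * E j := by
          rw [Finset.mul_sum]
          exact Finset.sum_congr rfl fun j _ => by rw [hu0]; ring
        rw [hsum, hEi]
        exact hscalar _ (hS E (fun j => (hE01 j).1) i)
      | succ n ih =>
        intro i
        rw [husucc, husucc]
        exact hmono _ _ (hupos n) ih i
    have humono' : ∀ i, Monotone fun n => u n i := by
      intro i
      exact monotone_nat_of_le_succ fun n => humono n i
    -- the limit x
    set x : Fin m → ℝ := fun i => ⨆ n, u n i with hx_def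
    have hbdd : ∀ i, BddAbove (Set.range fun n => u n i) :=
      fun i => ⟨E i, by rintro y ⟨n, rfl⟩; exact huE n i⟩
    have hux : ∀ i, Filter.Tendsto (fun n => u n i) Filter.atTop (nhds (x i)) :=
      fun i => tendsto_atTop_ciSup (humono' i) (hbdd i)
    have hxE : ∀ i, x i ≤ E i := fun i => ciSup_le fun n => huE n i
    have hx_ge : ∀ i, t * E i ≤ x i := by
      intro i
      calc t * E i = u 0 i := (hu0 i).symm
        _ ≤ x i := le_ciSup (hbdd i) 0
    have hx_nonneg : ∀ i, 0 ≤ x i := fun i =>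
      le_trans (mul_nonneg ht.le (hE01 i).1) (hx_ge i)
    have hux' : Filter.Tendsto u Filter.atTop (nhds x) := tendsto_pi_nhds.2 hux
    -- f is continuous at x
    have hcf : ContinuousAt f x := by
      rw [continuousAt_pi]
      intro i
      have heq : (fun a : Fin m → ℝ => f a i) =
          fun a : Fin m → ℝ => 1 - 1 / (1 + ∑ j, (dmat i j : ℝ) * a j) :=
        funext fun a => hf a i
      rw [heq]
      have hc : Continuous fun a : Fin m → ℝ => 1 + ∑ j, (dmat i j : ℝ) * a j :=
        continuous_const.add (continuous_finset_sum _ fun j _ =>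
          continuous_const.mul (continuous_apply j))
      exact (continuousAt_const.sub
        (continuousAt_const.div hc.continuousAt (ne_of_gt (hden x hx_nonneg i))))
    -- x is a fixed point
    have hfx : f x = x := by
      have h1 : Filter.Tendsto (fun n => f (u n)) Filter.atTop (nhds (f x)) :=
        hcf.tendsto.comp hux'
      have h2 : Filter.Tendsto (fun n => f (u n)) Filter.atTop (nhds x) := by
        have : (fun n => f (u n)) = fun n => u (n + 1) := funext fun n => (husucc n).symm
        rw [this]
        exact hux'.comp (Filter.tendsto_add_atTop_nat 1)
      exact tendsto_nhds_unique h1 h2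
    -- now show x = E
    have hxeqE : x = E := by
      by_cases hEzero : ∀ i, E i = 0
      · funext i
        have h1 := hxE i
        have h2 := hx_nonneg i
        rw [hEzero i] at h1 ⊢
        linarith
      · push_neg at hEzero
        obtain ⟨i₀, hi₀⟩ := hEzero
        have hEi₀ : 0 < E i₀ := lt_of_le_of_ne (hE01 i₀).1 (Ne.symm hi₀)
        set X : Set ℝ := {s : ℝ | ∀ i, s * E i ≤ x i} with hX_def
        have hbddX : BddAbove X := by
          refine ⟨x i₀ / E i₀, fun s hs => ?_⟩
          rw [le_div_iff₀ hEi₀]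
          exact hs i₀
        have htX : t ∈ X := hx_ge
        set s₀ : ℝ := sSup X with hs₀_def
        have hs₀t : t ≤ s₀ := le_csSup hbddX htX
        have hs₀pos : 0 < s₀ := lt_of_lt_of_le ht hs₀t
        have claimA : ∀ i, s₀ * E i ≤ x i := by
          intro i
          rcases eq_or_lt_of_le (hE01 i).1 with h | h
          · rw [← h, mul_zero]; exact hx_nonneg i
          · have h1 : s₀ ≤ x i / E i := by
              apply csSup_le ⟨t, htX⟩
              intro s hs
              rw [le_div_iff₀ h]
              exact hs i
            rw [← le_div_iff₀ h]
            exact h1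
        have claimB : 1 ≤ s₀ := by
          by_contra hcon
          push_neg at hcon
          -- strict improvement at every coordinate with E i > 0
          have hs₀E_nonneg : ∀ i, 0 ≤ s₀ * E i := fun i => mul_nonneg hs₀pos.le (hE01 i).1
          have strict : ∀ i, 0 < E i → s₀ * E i < x i := by
            intro i hEi
            set A : ℝ := ∑ j, (dmat i j : ℝ) * E j with hA_def
            have hA0 : 0 ≤ A := hS E (fun j => (hE01 j).1) i
            have hEiA : E i = 1 - 1 / (1 + A) := by
              conv_lhs => rw [← hfE]
              exact hf E i
            have hApos : 0 < A := by
              rcases eq_or_lt_of_le hA0 with h | h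
              · exfalso; rw [hEiA, ← h] at hEi; norm_num at hEi
              · exact h
            -- lower bound x ≥ f (s₀ • E) pointwise, coordinate i
            have hxi : f (fun j => s₀ * E j) i ≤ x i := by
              have h1 : ∀ j, 0 ≤ s₀ * E j := hs₀E_nonneg
              have h2 := hmono (fun j => s₀ * E j) x h1 claimA i
              rw [hfx] at h2
              exact h2
            have hsum : ∑ j, (dmat i j : ℝ) * (s₀ * E j) = s₀ * A := by
              rw [hA_def, Finset.mul_sum]
              exact Finset.sum_congr rfl fun j _ => by ring
            rw [hf, hsum] at hxi
            have h1 : (0:ℝ) < 1 + A := by linarith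
            have h2 : (0:ℝ) < 1 + s₀ * A := by nlinarith
            have key : s₀ * E i < 1 - 1 / (1 + s₀ * A) := by
              rw [hEiA]
              have e1 : s₀ * (1 - 1 / (1 + A)) = s₀ * A / (1 + A) := by field_simp; ring
              have e2 : 1 - 1 / (1 + s₀ * A) = s₀ * A / (1 + s₀ * A) := by field_simp; ring
              rw [e1, e2, div_lt_div_iff₀ h1 h2]
              have hlt : s₀ * A < A := by nlinarith
              nlinarith [mul_pos (mul_pos hs₀pos hApos) (sub_pos.2 hlt)]
            linarith
          -- pick ε > 0 with s₀ + ε still in X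
          obtain ⟨ε, hε, hε1, hεc⟩ := hsmall
            (fun i => if h : E i = 0 then 1 else (x i - s₀ * E i) / E i)
            (by
              intro i
              by_cases h : E i = 0
              · simp [h]
              · simp only [h, dif_neg, not_false_iff]
                have hEi : 0 < E i := lt_of_le_of_ne (hE01 i).1 (Ne.symm h)
                exact div_pos (by linarith [strict i hEi]) hEi)
          have hmem : s₀ + ε ∈ X := by
            intro i
            by_cases h : E i = 0
            · rw [h, mul_zero]; exact hx_nonneg i
            · have hEi : 0 < E i := lt_of_le_of_ne (hE01 i).1 (Ne.symm h)
              have h1 := hεc i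
              simp only [h, dif_neg, not_false_iff] at h1
              rw [le_div_iff₀ hEi] at h1
              nlinarith [claimA i]
          have := le_csSup hbddX hmem
          linarith
        funext i
        have h1 := claimA i
        have h2 := hxE i
        nlinarith [(hE01 i).1]
    rw [hxeqE] at hux'
    exact hux'
  -- E ≤ l
  have hEl : ∀ i, E i ≤ l i := by
    obtain ⟨t, ht, ht1, htδ⟩ := hsmall δ fun i => (hδ i).1
    have htE : ∀ i, t * E i ≤ δ i := by
      intro i
      calc t * E i ≤ t * 1 := by nlinarith [(hE01 i).2, (hE01 i).1]
        _ = t := mul_one t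
        _ ≤ δ i := htδ i
    have key : ∀ n, ∀ i, 0 ≤ f^[n] (t • E) i ∧ f^[n] (t • E) i ≤ l i := by
      intro n
      induction n with
      | zero =>
        intro i
        constructor
        · simp only [Function.iterate_zero, id_eq, Pi.smul_apply, smul_eq_mul]
          exact mul_nonneg ht.le (hE01 i).1
        · simp only [Function.iterate_zero, id_eq, Pi.smul_apply, smul_eq_mul]
          exact le_trans (htE i) (hδ i).2
      | succ n ih =>
        intro i
        rw [Function.iterate_succ_apply']
        exact ⟨hnn _ (fun j => (ih j).1) i, hdom _ (fun j => (ih j).1) (fun j => (ih j).2) i⟩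
    intro i
    have h1 : Filter.Tendsto (fun n => f^[n] (t • E) i) Filter.atTop (nhds (E i)) :=
      tendsto_pi_nhds.1 (hconv t ht ht1) i
    exact le_of_tendsto h1 (Filter.Eventually.of_forall fun n => (key n i).2)
  constructor
  · -- Part 1
    intro x hx _ i
    have key : ∀ n, ∀ j, 0 ≤ f^[n] δ j ∧ f^[n] δ j ≤ l j := by
      intro n
      induction n with
      | zero => intro j; exact ⟨(hδ j).1.le, (hδ j).2⟩
      | succ n ih =>
        intro j
        rw [Function.iterate_succ_apply']
        exact ⟨hnn _ (fun k => (ih k).1) j, hdom _ (fun k => (ih k).1) (fun k => (ih k).2) j⟩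
    have h1 : Filter.Tendsto (fun n => f^[n] δ i) Filter.atTop (nhds (x i)) :=
      tendsto_pi_nhds.1 hx i
    exact le_of_tendsto h1 (Filter.Eventually.of_forall fun n => (key n i).2)
  · -- Part 2
    intro a₀ h0 ha₀E
    obtain ⟨t, ht, ht1, hta⟩ := hsmall a₀ h0
    have htE : ∀ i, t * E i ≤ a₀ i := by
      intro i
      calc t * E i ≤ t * 1 := by nlinarith [(hE01 i).2, (hE01 i).1]
        _ = t := mul_one t
        _ ≤ a₀ i := hta i
    -- squeeze: f^[n] (t•E) ≤ f^[n] a₀ ≤ E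
    have key : ∀ n, ∀ i, f^[n] (t • E) i ≤ f^[n] a₀ i ∧ f^[n] a₀ i ≤ E i ∧ 0 ≤ f^[n] (t • E) i := by
      intro n
      induction n with
      | zero =>
        intro i
        refine ⟨?_, ha₀E i, ?_⟩
        · simp only [Function.iterate_zero, id_eq, Pi.smul_apply, smul_eq_mul]
          exact htE i
        · simp only [Function.iterate_zero, id_eq, Pi.smul_apply, smul_eq_mul]
          exact mul_nonneg ht.le (hE01 i).1
      | succ n ih =>
        intro i
        rw [Function.iterate_succ_apply', Function.iterate_succ_apply']
        refine ⟨hmono _ _ (fun j => (ih j).2.2) (fun j => (ih j).1) i, ?_, hnn _ (fun j => (ih j).2.2) i⟩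
        have h1 : ∀ j, 0 ≤ f^[n] a₀ j := fun j => le_trans (ih j).2.2 (ih j).1
        calc f (f^[n] a₀) i ≤ f E i := hmono _ _ h1 (fun j => (ih j).2.1) i
          _ = E i := by rw [hfE]
    refine ⟨E, ?_, hfE, hEl⟩
    rw [tendsto_pi_nhds]
    intro i
    refine tendsto_of_tendsto_of_tendsto_of_le_of_le
      (tendsto_pi_nhds.1 (hconv t ht ht1) i) tendsto_const_nhds
      (fun n => (key n i).1) (fun n => (key n i).2.1)
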